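/- For s, t ∈ [4/9, 5/9], the simplex R(s,t) ⊂ R⁵ with vertices (s,1,1/3,1,1), (s,0,1/3,1,1), (s,2−3t,1/3,0,1), (2−3s,t,0,1/3,0), (0,t,1,1/3,0), (1,t,1,1/3,0) satisfies R(s,t) ⊆ Q₅ = [0,1]⁵ and ξ(R(s,t)) = 5, and all five axial diameters of R(s,t) equal 1. -/
import Mathlib

open Finset MeasureTheory

/-- The unit cube `[0,1]^n` in `ℝ^n`. -/
def unitCube (n : ℕ) : Set (Fin n → ℝ) := {x | ∀ i, 0 ≤ x i ∧ x i ≤ 1}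

/-- The set of vertices of the unit cube, i.e. `{0,1}^n`. -/
def cubeVerts (n : ℕ) : Set (Fin n → ℝ) := {x | ∀ i, x i = 0 ∨ x i = 1}

/-- The (solid) simplex spanned by `n+1` points. -/
def simplexSet {n : ℕ} (v : Fin (n + 1) → (Fin n → ℝ)) : Set (Fin n → ℝ) :=
  convexHull ℝ (Set.range v)

/-- The centroid (center of gravity) of the simplex with vertices `v`. -/
noncomputable def simplexCentroid {n : ℕ} (v : Fin (n + 1) → (Fin n → ℝ)) : Fin n → ℝ :=
  ((n : ℝ) + 1)⁻¹ • ∑ j, v j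

/-- The homothety of the simplex with vertices `v`, with center the centroid and ratio `σ`. -/
noncomputable def homSimplex {n : ℕ} (v : Fin (n + 1) → (Fin n → ℝ)) (σ : ℝ) : Set (Fin n → ℝ) :=
  (fun x => simplexCentroid v + σ • (x - simplexCentroid v)) '' simplexSet v

/-- `ξ(S) = min {σ ≥ 1 : Q_n ⊆ σS}`. -/
noncomputable def xiVal {n : ℕ} (v : Fin (n + 1) → (Fin n → ℝ)) : ℝ :=
  sInf {σ : ℝ | 1 ≤ σ ∧ unitCube n ⊆ homSimplex v σ}

/-- A function `ℝ^n → ℝ` is an affine polynomial of degree at most 1. -/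
def IsAffinePoly {n : ℕ} (f : (Fin n → ℝ) → ℝ) : Prop :=
  ∃ a : Fin n → ℝ, ∃ b : ℝ, ∀ x, f x = ∑ i, a i * x i + b

/-- `lam` is the family of basic Lagrange polynomials of the simplex with vertices `v`. -/
def IsLagrangeBasis {n : ℕ} (v : Fin (n + 1) → (Fin n → ℝ))
    (lam : Fin (n + 1) → (Fin n → ℝ) → ℝ) : Prop :=
  (∀ j, IsAffinePoly (lam j)) ∧ ∀ j k, lam j (v k) = if j = k then 1 else 0

/-- The `i`-th axial diameter of a set `S ⊆ ℝ^n`: the supremum of lengths of segments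
in `S` parallel to the `i`-th coordinate axis. -/
noncomputable def axialDiam {n : ℕ} (S : Set (Fin n → ℝ)) (i : Fin n) : ℝ :=
  sSup {t : ℝ | ∃ x ∈ S, ∃ y ∈ S, (∀ k, k ≠ i → x k = y k) ∧ y i - x i = t}

/-- The family of simplices `R(s,t) ⊂ ℝ⁵`. -/
noncomputable def Rverts (s t : ℝ) : Fin 6 → (Fin 5 → ℝ) :=
  ![![s, 1, 1/3, 1, 1], ![s, 0, 1/3, 1, 1], ![s, 2 - 3*t, 1/3, 0, 1],
    ![2 - 3*s, t, 0, 1/3, 0], ![0, t, 1, 1/3, 0], ![1, t, 1, 1/3, 0]]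

lemma cons_val_five' {α : Type*} {m : ℕ} (x : α) (u : Fin m.succ.succ.succ.succ.succ → α) :
    Matrix.vecCons x u 5 =
      Matrix.vecHead (Matrix.vecTail (Matrix.vecTail (Matrix.vecTail (Matrix.vecTail u)))) :=
  rfl

/-- Convex combinations of the six vertices belong to the simplex. -/
lemma comb_mem_simplexSet (v : Fin 6 → (Fin 5 → ℝ)) (w : Fin 6 → ℝ)
    (hw : ∀ j, 0 ≤ w j) (hsum : ∑ j, w j = 1) :
    (∑ j, w j • v j) ∈ simplexSet v := by
  have h := Finset.centerMass_mem_convexHull Finset.univ (fun i _ => hw i)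
    (by rw [hsum]; norm_num) (fun i (_ : i ∈ Finset.univ) => Set.mem_range_self (f := v) i)
  rwa [Finset.centerMass_eq_of_sum_1 _ _ hsum] at h

lemma Rcentroid (s t : ℝ) : simplexCentroid (Rverts s t) = fun _ => (1/2 : ℝ) := by
  funext i
  fin_cases i <;>
    simp [simplexCentroid, Rverts, Fin.sum_univ_six, Matrix.cons_val_succ, Matrix.head_cons, Matrix.tail_cons, cons_val_five', Matrix.vecHead, Matrix.vecTail] <;> ring

lemma cube_convex : Convex ℝ (unitCube 5) := by
  intro x hx y hy a b ha hb hab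
  intro i
  have h1 := hx i; have h2 := hy i
  simp only [Pi.add_apply, Pi.smul_apply, smul_eq_mul]
  constructor
  · nlinarith [mul_nonneg ha h1.1, mul_nonneg hb h2.1]
  · nlinarith [mul_le_mul_of_nonneg_left h1.2 ha, mul_le_mul_of_nonneg_left h2.2 hb]

lemma axial_eq_one {S : Set (Fin 5 → ℝ)} (hS : S ⊆ unitCube 5) (i : Fin 5)
    (x y : Fin 5 → ℝ) (hx : x ∈ S) (hy : y ∈ S)
    (hxy : ∀ k, k ≠ i → x k = y k) (hd : y i - x i = 1) :
    axialDiam S i = 1 := by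
  have hmem : (1 : ℝ) ∈ {t : ℝ | ∃ x ∈ S, ∃ y ∈ S, (∀ k, k ≠ i → x k = y k) ∧ y i - x i = t} :=
    ⟨x, hx, y, hy, hxy, hd⟩
  have hub : ∀ d ∈ {t : ℝ | ∃ x ∈ S, ∃ y ∈ S, (∀ k, k ≠ i → x k = y k) ∧ y i - x i = t},
      d ≤ 1 := by
    rintro d ⟨a, ha, b, hb, -, rfl⟩
    have h1 := (hS ha) i
    have h2 := (hS hb) i
    linarith [h1.1, h1.2, h2.1, h2.2]
  exact le_antisymm (csSup_le ⟨1, hmem⟩ hub) (le_csSup ⟨1, hub⟩ hmem)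

set_option maxHeartbeats 2000000 in
/-- for `s, t ∈ [4/9, 5/9]`, `R(s,t) ⊆ Q₅`, `ξ(R(s,t)) = 5`, and all five
axial diameters of `R(s,t)` equal `1`. -/
theorem Rst_extremal (s t : ℝ) (hs : s ∈ Set.Icc (4/9 : ℝ) (5/9))
    (ht : t ∈ Set.Icc (4/9 : ℝ) (5/9)) :
    simplexSet (Rverts s t) ⊆ unitCube 5 ∧
    xiVal (Rverts s t) = 5 ∧
    ∀ i, axialDiam (simplexSet (Rverts s t)) i = 1 := by
  obtain ⟨hs1, hs2⟩ := hs
  obtain ⟨ht1, ht2⟩ := ht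
  -- Part 1 : containment in the cube
  have hVcube : ∀ j, Rverts s t j ∈ unitCube 5 := by
    intro j
    fin_cases j <;> intro i <;> fin_cases i <;>
      simp [Rverts, Matrix.cons_val_succ, Matrix.head_cons, Matrix.tail_cons, cons_val_five', Matrix.vecHead, Matrix.vecTail] <;>
      first
        | (constructor <;> linarith)
        | linarith
        | norm_num
  have part1 : simplexSet (Rverts s t) ⊆ unitCube 5 :=
    convexHull_min (by rintro _ ⟨j, rfl⟩; exact hVcube j) cube_convex
  refine ⟨part1, ?_, ?_⟩
  -- Part 2 : ξ = 5
  · have hlb : ∀ σ ∈ {σ : ℝ | 1 ≤ σ ∧ unitCube 5 ⊆ homSimplex (Rverts s t) σ}, (5:ℝ) ≤ σ := by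
      rintro σ ⟨hσ1, hσ2⟩
      have h0 : (0 : Fin 5 → ℝ) ∈ unitCube 5 := by intro i; norm_num
      obtain ⟨y, hyS, hEq⟩ := hσ2 h0
      rw [Rcentroid s t] at hEq
      have e : ∀ i : Fin 5, 1/2 + σ * (y i - 1/2) = 0 := by
        intro i
        have h := congrFun hEq i
        simpa using h
      -- the simplex lies in the halfspace λ₀ ≥ 0
      have hhalf : simplexSet (Rverts s t) ⊆
          {z : Fin 5 → ℝ | 0 ≤ z 1 + (2-3*t) * z 3 + (3*t-4/3) * z 4 - 2/3} := by
        apply convexHull_min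
        · rintro _ ⟨j, rfl⟩
          fin_cases j <;> simp [Rverts, Matrix.cons_val_succ, Matrix.head_cons, Matrix.tail_cons, cons_val_five', Matrix.vecHead, Matrix.vecTail] <;> linarith
        · intro p hp q hq a b ha hb hab
          simp only [Set.mem_setOf_eq, Pi.add_apply, Pi.smul_apply, smul_eq_mul] at *
          nlinarith [mul_nonneg ha hp, mul_nonneg hb hq]
      have hL0 := hhalf hyS
      simp only [Set.mem_setOf_eq] at hL0
      have hσ0 : (0:ℝ) ≤ σ := le_trans zero_le_one hσ1
      have h1 : σ * y 1 = σ/2 - 1/2 := by linear_combination e 1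
      have h3 : σ * y 3 = σ/2 - 1/2 := by linear_combination e 3
      have h4 : σ * y 4 = σ/2 - 1/2 := by linear_combination e 4
      have h3t : t * (σ * y 3) = t * (σ/2 - 1/2) := by rw [h3]
      have h4t : t * (σ * y 4) = t * (σ/2 - 1/2) := by rw [h4]
      have key := mul_nonneg hσ0 hL0
      nlinarith [key, h1, h3, h4, h3t, h4t]
    have h5mem : (5:ℝ) ∈ {σ : ℝ | 1 ≤ σ ∧ unitCube 5 ⊆ homSimplex (Rverts s t) σ} := by
      constructor
      · norm_num
      · intro x hx
        have hx' : ∀ i, 0 ≤ x i ∧ x i ≤ 1 := hx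
        set W : Fin 6 → ℝ :=
          ![2/15 + (x 1 + (2-3*t)*x 3 + (3*t-4/3)*x 4 - 2/3)/5,
            2/15 + (-(x 1) + (3*t-1)*x 3 + (5/3-3*t)*x 4 + 1/3)/5,
            2/15 + (-(x 3) + (2/3)*x 4 + 1/3)/5,
            2/15 + (-(x 2) - (2/3)*x 4 + 1)/5,
            2/15 + (-(x 0) + (3*s-1)*x 2 + (3*s-5/3)*x 4 + 2-3*s)/5,
            2/15 + (x 0 + (2-3*s)*x 2 + (4/3-3*s)*x 4 + 3*s-2)/5] with hW
        have hWnn : ∀ j, 0 ≤ W j := by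
          intro j
          have h0 := hx' 0; have h1 := hx' 1; have h2 := hx' 2
          have h3 := hx' 3; have h4 := hx' 4
          fin_cases j <;>
            simp [hW, Matrix.cons_val_succ, Matrix.head_cons, Matrix.tail_cons, cons_val_five',
              Matrix.vecHead, Matrix.vecTail]
          · nlinarith [mul_nonneg (by linarith : (0:ℝ) ≤ 2-3*t) h3.1,
              mul_nonneg (by linarith : (0:ℝ) ≤ 3*t-4/3) h4.1]
          · nlinarith [mul_nonneg (by linarith : (0:ℝ) ≤ 3*t-1) h3.1,
              mul_nonneg (by linarith : (0:ℝ) ≤ 5/3-3*t) h4.1]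
          · linarith [h3.2, h4.1]
          · linarith [h2.2, h4.2]
          · nlinarith [mul_nonneg (by linarith : (0:ℝ) ≤ 3*s-1) h2.1,
              mul_nonneg (by linarith : (0:ℝ) ≤ 5/3-3*s) (by linarith [h4.2] : (0:ℝ) ≤ 1 - x 4)]
          · nlinarith [mul_nonneg (by linarith : (0:ℝ) ≤ 2-3*s) h2.1,
              mul_nonneg (by linarith : (0:ℝ) ≤ 3*s-4/3) (by linarith [h4.2] : (0:ℝ) ≤ 1 - x 4)]
        have hWsum : ∑ j, W j = 1 := by
          simp [hW, Fin.sum_univ_six, Matrix.cons_val_succ, Matrix.head_cons, Matrix.tail_cons, cons_val_five', Matrix.vecHead, Matrix.vecTail]; ring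
        refine ⟨∑ j, W j • Rverts s t j, comb_mem_simplexSet _ _ hWnn hWsum, ?_⟩
        rw [Rcentroid s t]
        funext i
        fin_cases i <;>
          simp [hW, Rverts, Fin.sum_univ_six, Matrix.cons_val_succ, Matrix.head_cons, Matrix.tail_cons, cons_val_five', Matrix.vecHead, Matrix.vecTail, Pi.add_apply,
            Pi.smul_apply, Pi.sub_apply, smul_eq_mul] <;> ring
    have hbdd : BddBelow {σ : ℝ | 1 ≤ σ ∧ unitCube 5 ⊆ homSimplex (Rverts s t) σ} :=
      ⟨5, fun σ hσ => hlb σ hσ⟩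
    exact le_antisymm (csInf_le hbdd h5mem) (le_csInf ⟨5, h5mem⟩ hlb)
  -- Part 3 : axial diameters
  · intro i
    have mem_comb : ∀ w : Fin 6 → ℝ, (∀ j, 0 ≤ w j) → (∑ j, w j = 1) →
        (∑ j, w j • Rverts s t j) ∈ simplexSet (Rverts s t) :=
      fun w h1 h2 => comb_mem_simplexSet _ _ h1 h2
    fin_cases i
    · -- i = 0 : v4 and v5
      refine axial_eq_one part1 0 (Rverts s t 4) (Rverts s t 5)
        (subset_convexHull ℝ _ (Set.mem_range_self 4))
        (subset_convexHull ℝ _ (Set.mem_range_self 5)) ?_ ?_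
      · intro k hk
        fin_cases k
        · exact absurd rfl hk
        all_goals simp [Rverts, Matrix.cons_val_succ, Matrix.head_cons, Matrix.tail_cons, cons_val_five', Matrix.vecHead, Matrix.vecTail]
      · simp [Rverts, Matrix.cons_val_succ, Matrix.head_cons, Matrix.tail_cons, cons_val_five', Matrix.vecHead, Matrix.vecTail]
    · -- i = 1 : v1 and v0
      refine axial_eq_one part1 1 (Rverts s t 1) (Rverts s t 0)
        (subset_convexHull ℝ _ (Set.mem_range_self 1))
        (subset_convexHull ℝ _ (Set.mem_range_self 0)) ?_ ?_
      · intro k hk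
        fin_cases k
        · simp [Rverts, Matrix.cons_val_succ, Matrix.head_cons, Matrix.tail_cons, cons_val_five', Matrix.vecHead, Matrix.vecTail]
        · exact absurd rfl hk
        all_goals simp [Rverts, Matrix.cons_val_succ, Matrix.head_cons, Matrix.tail_cons, cons_val_five', Matrix.vecHead, Matrix.vecTail]
      · simp [Rverts, Matrix.cons_val_succ, Matrix.head_cons, Matrix.tail_cons, cons_val_five', Matrix.vecHead, Matrix.vecTail]
    · -- i = 2
      have hwy : ∀ j, 0 ≤ (![0,0,0,0,3*s-1,2-3*s] : Fin 6 → ℝ) j := by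
        intro j; fin_cases j <;> simp [Matrix.cons_val_succ, Matrix.head_cons, Matrix.tail_cons, cons_val_five', Matrix.vecHead, Matrix.vecTail] <;> linarith
      have hwys : ∑ j, (![0,0,0,0,3*s-1,2-3*s] : Fin 6 → ℝ) j = 1 := by
        simp [Fin.sum_univ_six, Matrix.cons_val_succ, Matrix.head_cons, Matrix.tail_cons, cons_val_five', Matrix.vecHead, Matrix.vecTail]; ring
      refine axial_eq_one part1 2 (Rverts s t 3)
        (∑ j, (![0,0,0,0,3*s-1,2-3*s] : Fin 6 → ℝ) j • Rverts s t j)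
        (subset_convexHull ℝ _ (Set.mem_range_self 3))
        (mem_comb _ hwy hwys) ?_ ?_
      · intro k hk
        fin_cases k
        · simp [Rverts, Fin.sum_univ_six, Matrix.cons_val_succ, Matrix.head_cons, Matrix.tail_cons, cons_val_five', Matrix.vecHead, Matrix.vecTail]; try ring
        · simp [Rverts, Fin.sum_univ_six, Matrix.cons_val_succ, Matrix.head_cons, Matrix.tail_cons, cons_val_five', Matrix.vecHead, Matrix.vecTail]; ring
        · exact absurd rfl hk
        · simp [Rverts, Fin.sum_univ_six, Matrix.cons_val_succ, Matrix.head_cons, Matrix.tail_cons, cons_val_five', Matrix.vecHead, Matrix.vecTail]; ring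
        · simp [Rverts, Fin.sum_univ_six, Matrix.cons_val_succ, Matrix.head_cons, Matrix.tail_cons, cons_val_five', Matrix.vecHead, Matrix.vecTail]; try ring
      · simp [Rverts, Fin.sum_univ_six, Matrix.cons_val_succ, Matrix.head_cons, Matrix.tail_cons, cons_val_five', Matrix.vecHead, Matrix.vecTail]; ring
    · -- i = 3
      have hwy : ∀ j, 0 ≤ (![2-3*t,3*t-1,0,0,0,0] : Fin 6 → ℝ) j := by
        intro j; fin_cases j <;> simp [Matrix.cons_val_succ, Matrix.head_cons, Matrix.tail_cons, cons_val_five', Matrix.vecHead, Matrix.vecTail] <;> linarith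
      have hwys : ∑ j, (![2-3*t,3*t-1,0,0,0,0] : Fin 6 → ℝ) j = 1 := by
        simp [Fin.sum_univ_six, Matrix.cons_val_succ, Matrix.head_cons, Matrix.tail_cons, cons_val_five', Matrix.vecHead, Matrix.vecTail]; ring
      refine axial_eq_one part1 3 (Rverts s t 2)
        (∑ j, (![2-3*t,3*t-1,0,0,0,0] : Fin 6 → ℝ) j • Rverts s t j)
        (subset_convexHull ℝ _ (Set.mem_range_self 2))
        (mem_comb _ hwy hwys) ?_ ?_
      · intro k hk
        fin_cases k
        · simp [Rverts, Fin.sum_univ_six, Matrix.cons_val_succ, Matrix.head_cons, Matrix.tail_cons, cons_val_five', Matrix.vecHead, Matrix.vecTail]; ring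
        · simp [Rverts, Fin.sum_univ_six, Matrix.cons_val_succ, Matrix.head_cons, Matrix.tail_cons, cons_val_five', Matrix.vecHead, Matrix.vecTail]; try ring
        · simp [Rverts, Fin.sum_univ_six, Matrix.cons_val_succ, Matrix.head_cons, Matrix.tail_cons, cons_val_five', Matrix.vecHead, Matrix.vecTail]; ring
        · exact absurd rfl hk
        · simp [Rverts, Fin.sum_univ_six, Matrix.cons_val_succ, Matrix.head_cons, Matrix.tail_cons, cons_val_five', Matrix.vecHead, Matrix.vecTail]; ring
      · simp [Rverts, Fin.sum_univ_six, Matrix.cons_val_succ, Matrix.head_cons, Matrix.tail_cons, cons_val_five', Matrix.vecHead, Matrix.vecTail]; ring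
    · -- i = 4
      have hwx : ∀ j, 0 ≤ (![0,0,0,2/3,5/3-3*s,3*s-4/3] : Fin 6 → ℝ) j := by
        intro j; fin_cases j <;> simp [Matrix.cons_val_succ, Matrix.head_cons, Matrix.tail_cons, cons_val_five', Matrix.vecHead, Matrix.vecTail] <;> linarith
      have hwxs : ∑ j, (![0,0,0,2/3,5/3-3*s,3*s-4/3] : Fin 6 → ℝ) j = 1 := by
        simp [Fin.sum_univ_six, Matrix.cons_val_succ, Matrix.head_cons, Matrix.tail_cons, cons_val_five', Matrix.vecHead, Matrix.vecTail]; ring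
      have hwy : ∀ j, 0 ≤ (![3*t-4/3,5/3-3*t,2/3,0,0,0] : Fin 6 → ℝ) j := by
        intro j; fin_cases j <;> simp [Matrix.cons_val_succ, Matrix.head_cons, Matrix.tail_cons, cons_val_five', Matrix.vecHead, Matrix.vecTail] <;> linarith
      have hwys : ∑ j, (![3*t-4/3,5/3-3*t,2/3,0,0,0] : Fin 6 → ℝ) j = 1 := by
        simp [Fin.sum_univ_six, Matrix.cons_val_succ, Matrix.head_cons, Matrix.tail_cons, cons_val_five', Matrix.vecHead, Matrix.vecTail]; ring
      refine axial_eq_one part1 4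
        (∑ j, (![0,0,0,2/3,5/3-3*s,3*s-4/3] : Fin 6 → ℝ) j • Rverts s t j)
        (∑ j, (![3*t-4/3,5/3-3*t,2/3,0,0,0] : Fin 6 → ℝ) j • Rverts s t j)
        (mem_comb _ hwx hwxs) (mem_comb _ hwy hwys) ?_ ?_
      · intro k hk
        fin_cases k
        · simp [Rverts, Fin.sum_univ_six, Matrix.cons_val_succ, Matrix.head_cons, Matrix.tail_cons, cons_val_five', Matrix.vecHead, Matrix.vecTail]; ring
        · simp [Rverts, Fin.sum_univ_six, Matrix.cons_val_succ, Matrix.head_cons, Matrix.tail_cons, cons_val_five', Matrix.vecHead, Matrix.vecTail]; ring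
        · simp [Rverts, Fin.sum_univ_six, Matrix.cons_val_succ, Matrix.head_cons, Matrix.tail_cons, cons_val_five', Matrix.vecHead, Matrix.vecTail]; ring
        · simp [Rverts, Fin.sum_univ_six, Matrix.cons_val_succ, Matrix.head_cons, Matrix.tail_cons, cons_val_five', Matrix.vecHead, Matrix.vecTail]; ring
        · exact absurd rfl hk
      · simp [Rverts, Fin.sum_univ_six, Matrix.cons_val_succ, Matrix.head_cons, Matrix.tail_cons, cons_val_five', Matrix.vecHead, Matrix.vecTail]; ring
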